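/- Every eigenfunction of a latin square graph corresponding to eigenvalue -3 has at least 6 nonzero values. -/
import Mathlib

/-- A latin square of order `n` as a function: each row and each column is injective. -/
def IsLatin {n : ℕ} (L : Fin n → Fin n → Fin n) : Prop :=
  (∀ r, Function.Injective (L r)) ∧ (∀ c, Function.Injective (fun r => L r c))

/-- The latin square graph on cells: distinct cells adjacent iff same row, column or letter. -/
def LSGraph {n : ℕ} (L : Fin n → Fin n → Fin n) : SimpleGraph (Fin n × Fin n) :=
  SimpleGraph.fromRel (fun u v => u.1 = v.1 ∨ u.2 = v.2 ∨ L u.1 u.2 = L v.1 v.2)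

open Finset
open scoped Classical

lemma adj_iff {n : ℕ} (L : Fin n → Fin n → Fin n) (x y : Fin n × Fin n) :
    (LSGraph L).Adj x y ↔ y ≠ x ∧ (y.1 = x.1 ∨ y.2 = x.2 ∨ L y.1 y.2 = L x.1 x.2) := by
  unfold LSGraph
  rw [SimpleGraph.fromRel_adj]
  constructor
  · rintro ⟨hne, h⟩
    refine ⟨Ne.symm hne, ?_⟩
    tauto
  · rintro ⟨hne, h⟩
    refine ⟨Ne.symm hne, ?_⟩
    tauto

noncomputable def Rsum {n : ℕ} (f : Fin n × Fin n → ℝ) (r : Fin n) : ℝ := ∑ c, f (r, c)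
noncomputable def Csum {n : ℕ} (f : Fin n × Fin n → ℝ) (c : Fin n) : ℝ := ∑ r, f (r, c)
noncomputable def Ssum {n : ℕ} (L : Fin n → Fin n → Fin n) (f : Fin n × Fin n → ℝ) (s : Fin n) : ℝ :=
  ∑ y ∈ Finset.univ.filter (fun y : Fin n × Fin n => L y.1 y.2 = s), f y

lemma nbr_sum {n : ℕ} (L : Fin n → Fin n → Fin n) (hL : IsLatin L)
    (f : Fin n × Fin n → ℝ) (x : Fin n × Fin n) :
    ∑ y ∈ Finset.univ.filter (fun y => (LSGraph L).Adj x y), f y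
      = Rsum f x.1 + Csum f x.2 + Ssum L f (L x.1 x.2) - 3 * f x := by
  have key : ∀ y : Fin n × Fin n,
      (if (LSGraph L).Adj x y then f y else 0)
        = (if y.1 = x.1 then f y else 0) + (if y.2 = x.2 then f y else 0)
          + (if L y.1 y.2 = L x.1 x.2 then f y else 0) - (if y = x then 3 * f x else 0) := by
    intro y
    by_cases hy : y = x
    · subst hy
      simp [SimpleGraph.irrefl]
      ring
    · rw [adj_iff]
      have h12 : ¬(y.1 = x.1 ∧ y.2 = x.2) := fun ⟨h1, h2⟩ => hy (Prod.ext h1 h2)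
      have h13 : ¬(y.1 = x.1 ∧ L y.1 y.2 = L x.1 x.2) := by
        rintro ⟨h1, h3⟩
        rw [h1] at h3
        exact hy (Prod.ext h1 (hL.1 x.1 h3))
      have h23 : ¬(y.2 = x.2 ∧ L y.1 y.2 = L x.1 x.2) := by
        rintro ⟨h2, h3⟩
        rw [h2] at h3
        exact hy (Prod.ext (hL.2 x.2 h3) h2)
      by_cases h1 : y.1 = x.1 <;> by_cases h2 : y.2 = x.2 <;>
        by_cases h3 : L y.1 y.2 = L x.1 x.2
      · exact absurd ⟨h1, h2⟩ h12
      · exact absurd ⟨h1, h2⟩ h12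
      · exact absurd ⟨h1, h3⟩ h13
      · simp [h1, h2, h3, hy]
        exact fun h => absurd (hL.1 x.1 h) h2
      · exact absurd ⟨h2, h3⟩ h23
      · simp [h1, h2, h3, hy]
        exact fun h => absurd (hL.2 x.2 h) h1
      · simp [h1, h2, h3, hy]
      · simp [h1, h2, h3, hy]
  have hrow : (∑ y : Fin n × Fin n, if y.1 = x.1 then f y else 0) = Rsum f x.1 := by
    rw [Fintype.sum_prod_type]
    have h : ∀ a : Fin n, (∑ b, if (a, b).1 = x.1 then f (a, b) else 0)
        = if a = x.1 then Rsum f a else 0 := by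
      intro a; by_cases h : a = x.1 <;> simp [h, Rsum]
    rw [Finset.sum_congr rfl (fun a _ => h a), Finset.sum_ite_eq' Finset.univ x.1]
    simp
  have hcol : (∑ y : Fin n × Fin n, if y.2 = x.2 then f y else 0) = Csum f x.2 := by
    rw [Fintype.sum_prod_type_right]
    have h : ∀ b : Fin n, (∑ a, if (a, b).2 = x.2 then f (a, b) else 0)
        = if b = x.2 then Csum f b else 0 := by
      intro b; by_cases h : b = x.2 <;> simp [h, Csum]
    rw [Finset.sum_congr rfl (fun b _ => h b), Finset.sum_ite_eq' Finset.univ x.2]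
    simp
  have hlet : (∑ y : Fin n × Fin n, if L y.1 y.2 = L x.1 x.2 then f y else 0)
      = Ssum L f (L x.1 x.2) := by
    rw [Ssum, Finset.sum_filter]
  have hdiag : (∑ y : Fin n × Fin n, if y = x then 3 * f x else 0) = 3 * f x := by
    rw [Finset.sum_ite_eq' Finset.univ x (fun _ => 3 * f x)]
    simp
  rw [Finset.sum_filter, Finset.sum_congr rfl (fun y _ => key y),
    Finset.sum_sub_distrib, Finset.sum_add_distrib, Finset.sum_add_distrib,
    hrow, hcol, hlet, hdiag]

lemma sums_zero {n : ℕ} (hn : 3 ≤ n) (L : Fin n → Fin n → Fin n) (hL : IsLatin L)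
    (f : Fin n × Fin n → ℝ)
    (heig : ∀ x, ∑ y ∈ Finset.univ.filter (fun y => (LSGraph L).Adj x y), f y = -3 * f x) :
    (∀ r, Rsum f r = 0) ∧ (∀ c, Csum f c = 0) ∧ (∀ s, Ssum L f s = 0) := by
  have eqE : ∀ r c, Rsum f r + Csum f c + Ssum L f (L r c) = 0 := by
    intro r c
    have h := heig (r, c)
    rw [nbr_sum L hL f (r, c)] at h
    simp only at h
    linarith
  set F : ℝ := ∑ y : Fin n × Fin n, f y with hFdef
  have hRF : ∑ r, Rsum f r = F := by
    rw [hFdef, Fintype.sum_prod_type]; rfl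
  have hCF : ∑ c, Csum f c = F := by
    rw [hFdef, Fintype.sum_prod_type_right]; rfl
  have hSF : ∑ s, Ssum L f s = F := by
    rw [hFdef]
    exact Finset.sum_fiberwise_of_maps_to (fun y _ => Finset.mem_univ _) f
  have hSrow : ∀ r, ∑ c, Ssum L f (L r c) = F := by
    intro r
    have hbij : Function.Bijective (L r) := Finite.injective_iff_bijective.mp (hL.1 r)
    rw [Fintype.sum_bijective (L r) hbij _ _ (fun _ => rfl), hSF]
  have hScol : ∀ c, ∑ r, Ssum L f (L r c) = F := by
    intro c
    have hbij : Function.Bijective (fun r => L r c) :=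
      Finite.injective_iff_bijective.mp (hL.2 c)
    rw [Fintype.sum_bijective _ hbij _ _ (fun _ => rfl), hSF]
  have hnR : (0:ℝ) < (n : ℝ) := by
    exact_mod_cast Nat.lt_of_lt_of_le (by norm_num) hn
  have hR0 : ∀ r, (n : ℝ) * Rsum f r + 2 * F = 0 := by
    intro r
    have h : ∑ c : Fin n, (Rsum f r + Csum f c + Ssum L f (L r c)) = 0 := by
      simp [eqE r]
    rw [Finset.sum_add_distrib, Finset.sum_add_distrib, Finset.sum_const, hCF, hSrow r] at h
    simp only [Finset.card_univ, Fintype.card_fin, nsmul_eq_mul] at h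
    linarith
  have hC0 : ∀ c, (n : ℝ) * Csum f c + 2 * F = 0 := by
    intro c
    have h : ∑ r : Fin n, (Rsum f r + Csum f c + Ssum L f (L r c)) = 0 := by
      simp [fun r => eqE r c]
    rw [Finset.sum_add_distrib, Finset.sum_add_distrib, Finset.sum_const, hRF, hScol c] at h
    simp only [Finset.card_univ, Fintype.card_fin, nsmul_eq_mul] at h
    linarith
  have hF : F = 0 := by
    have h : ∑ r : Fin n, ((n : ℝ) * Rsum f r + 2 * F) = 0 := by
      simp [hR0]
    rw [Finset.sum_add_distrib, ← Finset.mul_sum, hRF, Finset.sum_const] at h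
    simp only [Finset.card_univ, Fintype.card_fin, nsmul_eq_mul] at h
    nlinarith
  have hR : ∀ r, Rsum f r = 0 := by
    intro r
    have := hR0 r
    rw [hF] at this
    have : (n : ℝ) * Rsum f r = 0 := by linarith
    rcases mul_eq_zero.mp this with h | h
    · exact absurd h (ne_of_gt hnR)
    · exact h
  have hC : ∀ c, Csum f c = 0 := by
    intro c
    have := hC0 c
    rw [hF] at this
    have : (n : ℝ) * Csum f c = 0 := by linarith
    rcases mul_eq_zero.mp this with h | h
    · exact absurd h (ne_of_gt hnR)
    · exact h
  refine ⟨hR, hC, ?_⟩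
  intro s
  have r0 : Fin n := ⟨0, by omega⟩
  obtain ⟨c, hc⟩ := (Finite.injective_iff_surjective.mp (hL.1 r0)) s
  have h := eqE r0 c
  rw [hc, hR r0, hC c] at h
  linarith

open scoped Classical in
/-- Every eigenfunction of a latin square graph for eigenvalue `-3` has at least 6 nonzeros. -/
theorem stmt15 {n : ℕ} (hn : 3 ≤ n) (L : Fin n → Fin n → Fin n) (hL : IsLatin L)
    (f : Fin n × Fin n → ℝ) (hf : f ≠ 0)
    (heig : ∀ x, ∑ y ∈ Finset.univ.filter (fun y => (LSGraph L).Adj x y), f y = -3 * f x) :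
    6 ≤ (Finset.univ.filter (fun x => f x ≠ 0)).card := by
  obtain ⟨hR, hC, hS⟩ := sums_zero hn L hL f heig
  by_contra hlt
  push_neg at hlt
  set supp := Finset.univ.filter (fun x => f x ≠ 0) with hsupp
  have hmem : ∀ x, x ∈ supp ↔ f x ≠ 0 := by intro x; simp [hsupp]
  have hne : supp.Nonempty := by
    rcases Function.ne_iff.mp hf with ⟨x, hx⟩
    exact ⟨x, (hmem x).mpr hx⟩
  have hcard : supp.card ≤ 5 := by omega
  -- partner lemmas
  have prow : ∀ x ∈ supp, ∃ y ∈ supp, y ≠ x ∧ y.1 = x.1 := by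
    intro x hx
    by_contra hcon
    push_neg at hcon
    have h0 : ∀ c ∈ Finset.univ, c ≠ x.2 → f (x.1, c) = 0 := by
      intro c _ hcne
      by_contra hfc
      have hyc : (x.1, c) ∈ supp := (hmem _).mpr hfc
      exact hcon _ hyc (fun h => hcne (congrArg Prod.snd h)) rfl
    have hsum : Rsum f x.1 = f x := by
      calc Rsum f x.1 = f (x.1, x.2) := Finset.sum_eq_single_of_mem x.2 (Finset.mem_univ _) h0
        _ = f x := by rw [Prod.mk.eta]
    exact (hmem x).mp hx (by rw [← hsum, hR])
  have pcol : ∀ x ∈ supp, ∃ y ∈ supp, y ≠ x ∧ y.2 = x.2 := by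
    intro x hx
    by_contra hcon
    push_neg at hcon
    have h0 : ∀ r ∈ Finset.univ, r ≠ x.1 → f (r, x.2) = 0 := by
      intro r _ hrne
      by_contra hfr
      have hyr : (r, x.2) ∈ supp := (hmem _).mpr hfr
      exact hcon _ hyr (fun h => hrne (congrArg Prod.fst h)) rfl
    have hsum : Csum f x.2 = f x := by
      calc Csum f x.2 = f (x.1, x.2) := Finset.sum_eq_single_of_mem x.1 (Finset.mem_univ _) h0
        _ = f x := by rw [Prod.mk.eta]
    exact (hmem x).mp hx (by rw [← hsum, hC])
  have plet : ∀ x ∈ supp, ∃ y ∈ supp, y ≠ x ∧ L y.1 y.2 = L x.1 x.2 := by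
    intro x hx
    by_contra hcon
    push_neg at hcon
    have h0 : ∀ y ∈ Finset.univ.filter (fun y : Fin n × Fin n => L y.1 y.2 = L x.1 x.2),
        y ≠ x → f y = 0 := by
      intro y hy hyne
      by_contra hfy
      exact hcon y ((hmem y).mpr hfy) hyne (Finset.mem_filter.mp hy).2
    have hsum : Ssum L f (L x.1 x.2) = f x :=
      Finset.sum_eq_single_of_mem x (Finset.mem_filter.mpr ⟨Finset.mem_univ _, rfl⟩) h0
    exact (hmem x).mp hx (by rw [← hsum, hS])
  -- image cardinality bound
  have himg : ∀ (g : Fin n × Fin n → Fin n),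
      (∀ x ∈ supp, ∃ y ∈ supp, y ≠ x ∧ g y = g x) →
      2 * (supp.image g).card ≤ supp.card := by
    intro g hg
    rw [Finset.card_eq_sum_card_fiberwise
      (fun x hx => Finset.mem_image_of_mem g hx)]
    have h2 : ∀ b ∈ supp.image g, 2 ≤ (supp.filter (fun x => g x = b)).card := by
      intro b hb
      obtain ⟨x, hx, hgx⟩ := Finset.mem_image.mp hb
      obtain ⟨y, hy, hyx, hgy⟩ := hg x hx
      have h1 : 1 < (supp.filter (fun x => g x = b)).card :=
        Finset.one_lt_card.mpr ⟨x, Finset.mem_filter.mpr ⟨hx, hgx⟩,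
          y, Finset.mem_filter.mpr ⟨hy, by rw [hgy, hgx]⟩, Ne.symm hyx⟩
      omega
    calc 2 * (supp.image g).card = ∑ _b ∈ supp.image g, 2 := by
          rw [Finset.sum_const, smul_eq_mul, mul_comm]
      _ ≤ ∑ b ∈ supp.image g, (supp.filter (fun x => g x = b)).card :=
          Finset.sum_le_sum h2
  -- the row image and column image have exactly two elements
  have himg_card : ∀ (g : Fin n × Fin n → Fin n),
      (∀ x ∈ supp, ∃ y ∈ supp, y ≠ x ∧ g y = g x) → (supp.image g).card ≤ 2 := by
    intro g hg
    have := himg g hg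
    omega
  have hrow2 : (supp.image Prod.fst).card = 2 := by
    have hle := himg_card Prod.fst prow
    have hpos : 0 < (supp.image Prod.fst).card :=
      Finset.card_pos.mpr (hne.image _)
    rcases Nat.lt_or_ge (supp.image Prod.fst).card 2 with h | h
    · exfalso
      have h1 : (supp.image Prod.fst).card = 1 := by omega
      obtain ⟨r, hr⟩ := Finset.card_eq_one.mp h1
      obtain ⟨x, hx⟩ := hne
      obtain ⟨y, hy, hyx, hy2⟩ := pcol x hx
      have hxr : x.1 = r := by
        have := Finset.mem_image_of_mem Prod.fst hx
        rw [hr] at this; exact Finset.mem_singleton.mp this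
      have hyr : y.1 = r := by
        have := Finset.mem_image_of_mem Prod.fst hy
        rw [hr] at this; exact Finset.mem_singleton.mp this
      exact hyx (Prod.ext (hyr.trans hxr.symm) hy2)
    · omega
  have hcol2 : (supp.image Prod.snd).card = 2 := by
    have hle := himg_card Prod.snd pcol
    have hpos : 0 < (supp.image Prod.snd).card :=
      Finset.card_pos.mpr (hne.image _)
    rcases Nat.lt_or_ge (supp.image Prod.snd).card 2 with h | h
    · exfalso
      have h1 : (supp.image Prod.snd).card = 1 := by omega
      obtain ⟨c, hc⟩ := Finset.card_eq_one.mp h1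
      obtain ⟨x, hx⟩ := hne
      obtain ⟨y, hy, hyx, hy1⟩ := prow x hx
      have hxc : x.2 = c := by
        have := Finset.mem_image_of_mem Prod.snd hx
        rw [hc] at this; exact Finset.mem_singleton.mp this
      have hyc : y.2 = c := by
        have := Finset.mem_image_of_mem Prod.snd hy
        rw [hc] at this; exact Finset.mem_singleton.mp this
      exact hyx (Prod.ext hy1 (hyc.trans hxc.symm))
    · omega
  obtain ⟨r1, r2, hr12, hrpair⟩ := Finset.card_eq_two.mp hrow2
  obtain ⟨c1, c2, hc12, hcpair⟩ := Finset.card_eq_two.mp hcol2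
  have hy1mem : ∀ y ∈ supp, y.1 = r1 ∨ y.1 = r2 := by
    intro y hy
    have := Finset.mem_image_of_mem Prod.fst hy
    rw [hrpair] at this
    simpa using this
  have hy2mem : ∀ y ∈ supp, y.2 = c1 ∨ y.2 = c2 := by
    intro y hy
    have := Finset.mem_image_of_mem Prod.snd hy
    rw [hcpair] at this
    simpa using this
  -- all four cells of the 2x2 grid lie in the support
  have hfull : ∀ r, r ∈ supp.image Prod.fst → ((r, c1) ∈ supp ∧ (r, c2) ∈ supp) := by
    intro r hrimg
    obtain ⟨x, hx, hx1⟩ := Finset.mem_image.mp hrimg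
    obtain ⟨y, hy, hyx, hy1⟩ := prow x hx
    have hne2 : y.2 ≠ x.2 := fun h => hyx (Prod.ext hy1 h)
    rcases hy2mem x hx with h | h <;> rcases hy2mem y hy with h' | h'
    · exact absurd (h'.trans h.symm) hne2
    · constructor
      · rwa [← hx1, ← h, Prod.mk.eta]
      · rw [← hx1, ← hy1, ← h', Prod.mk.eta]; exact hy
    · constructor
      · rw [← hx1, ← hy1, ← h', Prod.mk.eta]; exact hy
      · rwa [← hx1, ← h, Prod.mk.eta]
    · exact absurd (h'.trans h.symm) hne2
  have hr1img : r1 ∈ supp.image Prod.fst := by rw [hrpair]; simp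
  have hr2img : r2 ∈ supp.image Prod.fst := by rw [hrpair]; simp
  obtain ⟨h11, h12⟩ := hfull r1 hr1img
  obtain ⟨h21, h22⟩ := hfull r2 hr2img
  have hmem4 : ∀ y ∈ supp, y = (r1, c1) ∨ y = (r1, c2) ∨ y = (r2, c1) ∨ y = (r2, c2) := by
    intro y hy
    rcases hy1mem y hy with h | h <;> rcases hy2mem y hy with h' | h'
    · exact Or.inl (Prod.ext h h')
    · exact Or.inr (Or.inl (Prod.ext h h'))
    · exact Or.inr (Or.inr (Or.inl (Prod.ext h h')))
    · exact Or.inr (Or.inr (Or.inr (Prod.ext h h')))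
  -- the diagonal cells share a letter
  have ha : L r2 c2 = L r1 c1 := by
    obtain ⟨y, hy, hyne, hyL⟩ := plet (r1, c1) h11
    rcases hmem4 y hy with h | h | h | h
    · exact absurd h hyne
    · subst h
      exact absurd (hL.1 r1 hyL) (Ne.symm hc12)
    · subst h
      exact absurd (hL.2 c1 hyL) (Ne.symm hr12)
    · subst h
      exact hyL
  -- row, column and letter sum equations on the four cells
  have e1 : f (r1, c1) + f (r1, c2) = 0 := by
    have h := hR r1
    rw [Rsum] at h
    have hsub : ∑ c ∈ ({c1, c2} : Finset (Fin n)), f (r1, c) = ∑ c, f (r1, c) := by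
      apply Finset.sum_subset (Finset.subset_univ _)
      intro c _ hc
      by_contra hfc
      rcases hy2mem (r1, c) ((hmem _).mpr hfc) with h' | h' <;>
        simp only at h' <;> subst h' <;> simp at hc
    rw [← hsub, Finset.sum_pair hc12] at h
    exact h
  have e2 : f (r2, c1) + f (r2, c2) = 0 := by
    have h := hR r2
    rw [Rsum] at h
    have hsub : ∑ c ∈ ({c1, c2} : Finset (Fin n)), f (r2, c) = ∑ c, f (r2, c) := by
      apply Finset.sum_subset (Finset.subset_univ _)
      intro c _ hc
      by_contra hfc
      rcases hy2mem (r2, c) ((hmem _).mpr hfc) with h' | h' <;>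
        simp only at h' <;> subst h' <;> simp at hc
    rw [← hsub, Finset.sum_pair hc12] at h
    exact h
  have e3 : f (r1, c1) + f (r2, c1) = 0 := by
    have h := hC c1
    rw [Csum] at h
    have hsub : ∑ r ∈ ({r1, r2} : Finset (Fin n)), f (r, c1) = ∑ r, f (r, c1) := by
      apply Finset.sum_subset (Finset.subset_univ _)
      intro r _ hr
      by_contra hfr
      rcases hy1mem (r, c1) ((hmem _).mpr hfr) with h' | h' <;>
        simp only at h' <;> subst h' <;> simp at hr
    rw [← hsub, Finset.sum_pair hr12] at h
    exact h
  have e4 : f (r1, c1) + f (r2, c2) = 0 := by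
    have h := hS (L r1 c1)
    rw [Ssum] at h
    have hpairne : ((r1, c1) : Fin n × Fin n) ≠ (r2, c2) :=
      fun h' => hr12 (congrArg Prod.fst h')
    have hsub : ∑ y ∈ ({(r1, c1), (r2, c2)} : Finset (Fin n × Fin n)), f y
        = ∑ y ∈ Finset.univ.filter (fun y : Fin n × Fin n => L y.1 y.2 = L r1 c1), f y := by
      apply Finset.sum_subset
      · intro y hy
        simp only [Finset.mem_insert, Finset.mem_singleton] at hy
        rcases hy with h' | h' <;> subst h' <;>
          exact Finset.mem_filter.mpr ⟨Finset.mem_univ _, by simp [ha]⟩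
      · intro y hyf hyp
        by_contra hfy
        have hys : y ∈ supp := (hmem _).mpr hfy
        have hyL : L y.1 y.2 = L r1 c1 := (Finset.mem_filter.mp hyf).2
        rcases hmem4 y hys with h' | h' | h' | h'
        · subst h'; simp at hyp
        · subst h'
          exact absurd (hL.1 r1 hyL) (Ne.symm hc12)
        · subst h'
          exact absurd (hL.2 c1 hyL) (Ne.symm hr12)
        · subst h'; simp at hyp
    rw [← hsub, Finset.sum_pair hpairne] at h
    exact h
  have hfx : f (r1, c1) ≠ 0 := (hmem _).mp h11
  apply hfx
  linarith
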